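/- In the two-type, two-category departing bandit with dominant diagonal structure (P_{1,x} ≥ P_{2,y} > P_{1,y} and P_{2,y} > P_{2,x}, all probabilities in (0,1)), for every finite horizon H, the optimal H-step deterministic category sequence is either (1,1,…,1) or (2,2,…,2); i.e., among all sequences (a₁,…,a_H) ∈ {1,2}^H, the H-term return Σ_{i=1}^H (b·P_{1,x}^{m_{1,i}}P_{2,x}^{m_{2,i}} + (1-b)·P_{1,y}^{m_{1,i}}P_{2,y}^{m_{2,i}}) is maximized by a constant sequence. -/

import Mathlib

open Finset

def cnt1 (a : ℕ → Bool) (i : ℕ) : ℕ := ((Finset.range i).filter (fun j => a j = true)).card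

def cnt2 (a : ℕ → Bool) (i : ℕ) : ℕ := ((Finset.range i).filter (fun j => a j = false)).card

/-- `H`-step expected return of the deterministic category sequence `a`
(`true` = Category 1, `false` = Category 2) with prior belief `b`. -/
noncomputable def finiteReturn (p1x p2x p1y p2y b : ℝ) (H : ℕ) (a : ℕ → Bool) : ℝ :=
  ∑ i ∈ Finset.range H, (b * p1x ^ cnt1 a (i + 1) * p2x ^ cnt2 a (i + 1)
      + (1 - b) * p1y ^ cnt1 a (i + 1) * p2y ^ cnt2 a (i + 1))


namespace DDaux


noncomputable def Sg (H : ℕ) (q : ℝ) : ℝ := ∑ i ∈ Finset.range H, q ^ i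

noncomputable def TT (H : ℕ) (x y : ℝ) : ℝ :=
  ∑ n ∈ Finset.range H, ∑ i ∈ Finset.range n, x ^ i * y ^ (n - 1 - i)

lemma Sg_nonneg {q : ℝ} (hq : 0 ≤ q) (H : ℕ) : 0 ≤ Sg H q := by
  unfold Sg; positivity

lemma Sg_pos {q : ℝ} (hq : 0 ≤ q) (H : ℕ) : 0 < Sg (H + 1) q := by
  unfold Sg
  refine Finset.sum_pos' (fun i _ => by positivity) ⟨0, Finset.mem_range.2 (Nat.succ_pos H), by simp⟩

lemma TT_nonneg {x y : ℝ} (hx : 0 ≤ x) (hy : 0 ≤ y) (H : ℕ) : 0 ≤ TT H x y := by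
  unfold TT; positivity

lemma TT_symm (H : ℕ) (x y : ℝ) : TT H x y = TT H y x := by
  unfold TT
  refine Finset.sum_congr rfl (fun n _ => ?_)
  rw [← Finset.sum_range_reflect]
  refine Finset.sum_congr rfl (fun i hi => ?_)
  have hi' : i < n := Finset.mem_range.1 hi
  have h1 : n - 1 - (n - 1 - i) = i := by omega
  rw [h1, mul_comm]

lemma TT_mono_left {x x' y : ℝ} (hx : 0 ≤ x) (hxx : x ≤ x') (hy : 0 ≤ y) (H : ℕ) :
    TT H x y ≤ TT H x' y := by
  unfold TT
  refine Finset.sum_le_sum (fun n _ => Finset.sum_le_sum (fun i _ => ?_))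
  exact mul_le_mul_of_nonneg_right (pow_le_pow_left₀ hx hxx i) (pow_nonneg hy _)

lemma TT_mono_right {x y y' : ℝ} (hy : 0 ≤ y) (hyy : y ≤ y') (hx : 0 ≤ x) (H : ℕ) :
    TT H x y ≤ TT H x y' := by
  rw [TT_symm H x y, TT_symm H x y']
  exact TT_mono_left hy hyy hx H

lemma Sg_sub (H : ℕ) (x y : ℝ) : Sg H x - Sg H y = (x - y) * TT H x y := by
  unfold Sg TT
  rw [← Finset.sum_sub_distrib, Finset.mul_sum]
  refine Finset.sum_congr rfl (fun n _ => ?_)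
  rw [mul_comm (x - y)]
  exact (geom_sum₂_mul x y n).symm

lemma TT_eq (H : ℕ) (x y : ℝ) : TT H x y = ∑ j ∈ Finset.range H, x ^ j * Sg (H - 1 - j) y := by
  induction H with
  | zero => simp [TT]
  | succ H ih =>
    have lhs : TT (H + 1) x y = TT H x y + ∑ i ∈ Finset.range H, x ^ i * y ^ (H - 1 - i) := by
      unfold TT; rw [Finset.sum_range_succ]
    rw [lhs, ih, Finset.sum_range_succ]
    have h00 : H + 1 - 1 - H = 0 := by omega
    rw [h00]
    have h0 : Sg 0 y = 0 := by simp [Sg]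
    rw [h0, mul_zero, add_zero, ← Finset.sum_add_distrib]
    refine Finset.sum_congr rfl (fun j hj => ?_)
    have hj' : j < H := Finset.mem_range.1 hj
    have e1 : H + 1 - 1 - j = (H - 1 - j) + 1 := by omega
    rw [e1]
    have e2 : Sg (H - 1 - j + 1) y = Sg (H - 1 - j) y + y ^ (H - 1 - j) := by
      unfold Sg; rw [Finset.sum_range_succ]
    rw [e2]; ring

lemma Sg_cross {A B : ℝ} (hB : 0 ≤ B) (hAB : B ≤ A) {R M : ℕ} (hRM : R ≤ M) :
    Sg M B * Sg R A ≤ Sg M A * Sg R B := by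
  have hA : 0 ≤ A := le_trans hB hAB
  have hsplit : ∀ q : ℝ, Sg M q = Sg R q + ∑ i ∈ Finset.Ico R M, q ^ i := by
    intro q
    unfold Sg
    rw [Finset.range_eq_Ico, Finset.range_eq_Ico]
    exact (Finset.sum_Ico_consecutive (fun i => q ^ i) (Nat.zero_le R) hRM).symm
  rw [hsplit A, hsplit B]
  have key : (∑ i ∈ Finset.Ico R M, B ^ i) * Sg R A
      ≤ (∑ i ∈ Finset.Ico R M, A ^ i) * Sg R B := by
    unfold Sg
    rw [Finset.sum_mul_sum, Finset.sum_mul_sum]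
    refine Finset.sum_le_sum (fun a ha => Finset.sum_le_sum (fun i hi => ?_))
    have ha' : R ≤ a := (Finset.mem_Ico.1 ha).1
    have hi' : i < R := Finset.mem_range.1 hi
    have hb : B ^ a = B ^ i * B ^ (a - i) := by
      rw [← pow_add]; congr 1; omega
    have hA2 : A ^ a = A ^ i * A ^ (a - i) := by
      rw [← pow_add]; congr 1; omega
    have hple : B ^ (a - i) ≤ A ^ (a - i) := pow_le_pow_left₀ hB hAB _
    have h1 : (0:ℝ) ≤ A ^ i := pow_nonneg hA i
    have h2 : (0:ℝ) ≤ B ^ i := pow_nonneg hB i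
    rw [hb, hA2]
    nlinarith [mul_le_mul_of_nonneg_left hple (mul_nonneg h1 h2)]
  nlinarith [key]

lemma main_ineq {A B u : ℝ} (hB : 0 ≤ B) (hAB : B ≤ A) (hu : 0 ≤ u) (H : ℕ) :
    Sg H B * TT H u A ≤ Sg H A * TT H u B := by
  rw [TT_eq H u A, TT_eq H u B, Finset.mul_sum, Finset.mul_sum]
  refine Finset.sum_le_sum (fun j _ => ?_)
  have h := Sg_cross hB hAB (show H - 1 - j ≤ H by omega)
  calc Sg H B * (u ^ j * Sg (H - 1 - j) A) = u ^ j * (Sg H B * Sg (H - 1 - j) A) := by ring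
    _ ≤ u ^ j * (Sg H A * Sg (H - 1 - j) B) :=
        mul_le_mul_of_nonneg_left h (pow_nonneg hu j)
    _ = Sg H A * (u ^ j * Sg (H - 1 - j) B) := by ring

lemma cross_helper {P1 Q1 R1 P2 Q2 R2 : ℝ} (hP1 : 0 ≤ P1) (hQ1 : 0 ≤ Q1) (hR1 : 0 ≤ R1)
    (hP2 : 0 ≤ P2) (hQ2 : 0 ≤ Q2) (hR2 : 0 ≤ R2)
    (h1 : P2 * R2 < P1 * R1) (h2 : Q2 * R1 ≤ Q1 * R2) : P2 * Q2 ≤ P1 * Q1 := by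
  have hR1pos : 0 < R1 := by
    rcases eq_or_lt_of_le hR1 with h | h
    · exfalso; nlinarith
    · exact h
  rcases eq_or_lt_of_le hR2 with h | hR2pos
  · have hq : Q2 * R1 ≤ 0 := by nlinarith
    have hQ2z : Q2 = 0 := le_antisymm (by nlinarith) hQ2
    rw [hQ2z, mul_zero]; exact mul_nonneg hP1 hQ1
  · have hm : (P2 * R2) * (Q2 * R1) ≤ (P1 * R1) * (Q1 * R2) :=
      mul_le_mul (le_of_lt h1) h2 (mul_nonneg hQ2 hR1) (mul_nonneg hP1 hR1)
    have hgoal : P2 * Q2 * (R1 * R2) ≤ P1 * Q1 * (R1 * R2) := by nlinarith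
    exact le_of_mul_le_mul_right hgoal (by positivity)





noncomputable def Wret (p1x p2x p1y p2y β γ : ℝ) (H : ℕ) (a : ℕ → Bool) : ℝ :=
  ∑ i ∈ Finset.range H, (β * p1x ^ cnt1 a (i + 1) * p2x ^ cnt2 a (i + 1)
      + γ * p1y ^ cnt1 a (i + 1) * p2y ^ cnt2 a (i + 1))

lemma cnt1_shift (a : ℕ → Bool) (i : ℕ) :
    cnt1 a (i + 1) = cnt1 (fun j => a (j + 1)) i + (if a 0 then 1 else 0) := by
  unfold cnt1
  rw [Finset.card_filter, Finset.card_filter, Finset.sum_range_succ']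

lemma cnt2_shift (a : ℕ → Bool) (i : ℕ) :
    cnt2 a (i + 1) = cnt2 (fun j => a (j + 1)) i + (if a 0 then 0 else 1) := by
  unfold cnt2
  rw [Finset.card_filter, Finset.card_filter, Finset.sum_range_succ']
  cases h : a 0 <;> simp [h]

lemma Wret_succ_true (p1x p2x p1y p2y β γ : ℝ) (H : ℕ) (a : ℕ → Bool) (ha : a 0 = true) :
    Wret p1x p2x p1y p2y β γ (H + 1) a
      = Wret p1x p2x p1y p2y (β * p1x) (γ * p1y) H (fun j => a (j + 1))
        + (β * p1x + γ * p1y) := by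
  unfold Wret
  rw [Finset.sum_range_succ']
  congr 1
  · refine Finset.sum_congr rfl (fun i _ => ?_)
    rw [cnt1_shift, cnt2_shift, ha]
    simp only [if_true, if_pos]
    rw [pow_succ, pow_succ, add_zero]
    ring
  · rw [cnt1_shift, cnt2_shift, ha]
    simp [cnt1, cnt2]

lemma Wret_succ_false (p1x p2x p1y p2y β γ : ℝ) (H : ℕ) (a : ℕ → Bool) (ha : a 0 = false) :
    Wret p1x p2x p1y p2y β γ (H + 1) a
      = Wret p1x p2x p1y p2y (β * p2x) (γ * p2y) H (fun j => a (j + 1))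
        + (β * p2x + γ * p2y) := by
  unfold Wret
  rw [Finset.sum_range_succ']
  congr 1
  · refine Finset.sum_congr rfl (fun i _ => ?_)
    rw [cnt1_shift, cnt2_shift, ha]
    simp only [Bool.false_eq_true, if_false]
    rw [pow_succ, pow_succ, add_zero]
    ring
  · rw [cnt1_shift, cnt2_shift, ha]
    simp [cnt1, cnt2]

lemma Wret_constT (p1x p2x p1y p2y β γ : ℝ) (H : ℕ) :
    Wret p1x p2x p1y p2y β γ H (fun _ => true)
      = β * p1x * Sg H p1x + γ * p1y * Sg H p1y := by
  unfold Wret Sg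
  rw [Finset.mul_sum, Finset.mul_sum, ← Finset.sum_add_distrib]
  refine Finset.sum_congr rfl (fun i _ => ?_)
  have h1 : cnt1 (fun _ => true) (i + 1) = i + 1 := by simp [cnt1]
  have h2 : cnt2 (fun _ => true) (i + 1) = 0 := by simp [cnt2]
  rw [h1, h2, pow_zero, pow_succ, pow_succ]
  ring

lemma Wret_constF (p1x p2x p1y p2y β γ : ℝ) (H : ℕ) :
    Wret p1x p2x p1y p2y β γ H (fun _ => false)
      = β * p2x * Sg H p2x + γ * p2y * Sg H p2y := by
  unfold Wret Sg
  rw [Finset.mul_sum, Finset.mul_sum, ← Finset.sum_add_distrib]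
  refine Finset.sum_congr rfl (fun i _ => ?_)
  have h1 : cnt1 (fun _ => false) (i + 1) = 0 := by simp [cnt1]
  have h2 : cnt2 (fun _ => false) (i + 1) = i + 1 := by simp [cnt2]
  rw [h1, h2, pow_zero, pow_succ, pow_succ]
  ring


lemma lemA {x v u w β γ : ℝ} (hv : 0 < v) (hw : 0 < w) (hvu : v ≤ u) (hwu : w ≤ u)
    (hux : u ≤ x) (hβ : 0 ≤ β) (hγ : 0 ≤ γ) (H : ℕ) :
    β * x * Sg (H + 1) v + γ * w * Sg (H + 1) u ≤
      max (β * x * Sg (H + 1) x + γ * w * Sg (H + 1) w)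
          (β * v * Sg (H + 1) v + γ * u * Sg (H + 1) u) := by
  have hu0 : (0:ℝ) < u := lt_of_lt_of_le hv hvu
  have hx0 : (0:ℝ) < x := lt_of_lt_of_le hu0 hux
  rcases le_or_gt (β * x * Sg (H + 1) v + γ * w * Sg (H + 1) u)
      (β * v * Sg (H + 1) v + γ * u * Sg (H + 1) u) with h | h
  · exact le_max_of_le_right h
  · apply le_max_of_le_left
    have h1 : γ * (u - w) * Sg (H + 1) u < β * (x - v) * Sg (H + 1) v := by nlinarith
    have hA' : (w * TT (H + 1) u w) * Sg (H + 1) v ≤ (x * TT (H + 1) x v) * Sg (H + 1) u := by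
      have hT1 := TT_nonneg hu0.le hw.le (H + 1)
      have hSv := Sg_nonneg hv.le (H + 1)
      have hSu := Sg_nonneg hu0.le (H + 1)
      have s1 : (w * TT (H + 1) u w) * Sg (H + 1) v ≤ (u * TT (H + 1) u w) * Sg (H + 1) v :=
        mul_le_mul_of_nonneg_right (mul_le_mul_of_nonneg_right hwu hT1) hSv
      have s2 : (u * TT (H + 1) u w) * Sg (H + 1) v ≤ (u * TT (H + 1) u u) * Sg (H + 1) v :=
        mul_le_mul_of_nonneg_right
          (mul_le_mul_of_nonneg_left (TT_mono_right hw.le hwu hu0.le (H + 1)) hu0.le) hSv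
      have s3 : u * (Sg (H + 1) v * TT (H + 1) u u) ≤ u * (Sg (H + 1) u * TT (H + 1) u v) :=
        mul_le_mul_of_nonneg_left (main_ineq hv.le hvu hu0.le (H + 1)) hu0.le
      have h6 := TT_nonneg hu0.le hv.le (H + 1)
      have s4 : u * (Sg (H + 1) u * TT (H + 1) u v) ≤ x * (Sg (H + 1) u * TT (H + 1) x v) :=
        mul_le_mul hux
          (mul_le_mul_of_nonneg_left (TT_mono_left hu0.le hux hv.le (H + 1)) hSu)
          (mul_nonneg hSu h6) hx0.le
      calc (w * TT (H + 1) u w) * Sg (H + 1) v ≤ (u * TT (H + 1) u w) * Sg (H + 1) v := s1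
        _ ≤ (u * TT (H + 1) u u) * Sg (H + 1) v := s2
        _ = u * (Sg (H + 1) v * TT (H + 1) u u) := by ring
        _ ≤ u * (Sg (H + 1) u * TT (H + 1) u v) := s3
        _ ≤ x * (Sg (H + 1) u * TT (H + 1) x v) := s4
        _ = (x * TT (H + 1) x v) * Sg (H + 1) u := by ring
    have hc := cross_helper (mul_nonneg hβ (by linarith)) 
        (mul_nonneg hx0.le (TT_nonneg hx0.le hv.le (H + 1)))
        (Sg_nonneg hv.le (H + 1))
        (mul_nonneg hγ (by linarith))
        (mul_nonneg hw.le (TT_nonneg hu0.le hw.le (H + 1)))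
        (Sg_nonneg hu0.le (H + 1)) h1 hA'
    have e1 : Sg (H + 1) x = Sg (H + 1) v + (x - v) * TT (H + 1) x v := by
      have := Sg_sub (H + 1) x v; linarith
    have e2 : Sg (H + 1) u = Sg (H + 1) w + (u - w) * TT (H + 1) u w := by
      have := Sg_sub (H + 1) u w; linarith
    rw [e1, e2]
    nlinarith [hc]

lemma lemB {x v u w β γ : ℝ} (hv : 0 < v) (hw : 0 < w) (hvu : v ≤ u) (hwu : w ≤ u)
    (hux : u ≤ x) (hβ : 0 ≤ β) (hγ : 0 ≤ γ) (H : ℕ) :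
    β * v * Sg (H + 1) x + γ * u * Sg (H + 1) w ≤
      max (β * x * Sg (H + 1) x + γ * w * Sg (H + 1) w)
          (β * v * Sg (H + 1) v + γ * u * Sg (H + 1) u) := by
  have hu0 : (0:ℝ) < u := lt_of_lt_of_le hv hvu
  have hx0 : (0:ℝ) < x := lt_of_lt_of_le hu0 hux
  rcases le_or_gt (β * v * Sg (H + 1) x + γ * u * Sg (H + 1) w)
      (β * v * Sg (H + 1) v + γ * u * Sg (H + 1) u) with h | h
  · exact le_max_of_le_right h
  · apply le_max_of_le_left
    have e1 : Sg (H + 1) x = Sg (H + 1) v + (x - v) * TT (H + 1) x v := by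
      have := Sg_sub (H + 1) x v; linarith
    have e2 : Sg (H + 1) u = Sg (H + 1) w + (u - w) * TT (H + 1) u w := by
      have := Sg_sub (H + 1) u w; linarith
    have h1 : γ * (u - w) * (u * TT (H + 1) u w) < β * (x - v) * (v * TT (H + 1) x v) := by
      rw [e1, e2] at h; nlinarith
    have hB' : Sg (H + 1) w * (v * TT (H + 1) x v) ≤ Sg (H + 1) x * (u * TT (H + 1) u w) := by
      have hSw := Sg_nonneg hw.le (H + 1)
      have t1 : Sg (H + 1) w * (v * TT (H + 1) x v) ≤ Sg (H + 1) w * (v * TT (H + 1) x u) :=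
        mul_le_mul_of_nonneg_left
          (mul_le_mul_of_nonneg_left (TT_mono_right hv.le hvu hx0.le (H + 1)) hv.le) hSw
      have t2 : Sg (H + 1) w * (v * TT (H + 1) x u) = v * (Sg (H + 1) w * TT (H + 1) u x) := by
        rw [TT_symm (H + 1) x u]; ring
      have t3 : v * (Sg (H + 1) w * TT (H + 1) u x) ≤ v * (Sg (H + 1) x * TT (H + 1) u w) :=
        mul_le_mul_of_nonneg_left (main_ineq hw.le (le_trans hwu hux) hu0.le (H + 1)) hv.le
      have t4 : v * (Sg (H + 1) x * TT (H + 1) u w) ≤ u * (Sg (H + 1) x * TT (H + 1) u w) :=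
        mul_le_mul_of_nonneg_right hvu
          (mul_nonneg (Sg_nonneg hx0.le (H + 1)) (TT_nonneg hu0.le hw.le (H + 1)))
      calc Sg (H + 1) w * (v * TT (H + 1) x v) ≤ Sg (H + 1) w * (v * TT (H + 1) x u) := t1
        _ = v * (Sg (H + 1) w * TT (H + 1) u x) := t2
        _ ≤ v * (Sg (H + 1) x * TT (H + 1) u w) := t3
        _ ≤ u * (Sg (H + 1) x * TT (H + 1) u w) := t4
        _ = Sg (H + 1) x * (u * TT (H + 1) u w) := by ring
    have hc := cross_helper (mul_nonneg hβ (by linarith))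
        (Sg_nonneg hx0.le (H + 1))
        (mul_nonneg hv.le (TT_nonneg hx0.le hv.le (H + 1)))
        (mul_nonneg hγ (by linarith))
        (Sg_nonneg hw.le (H + 1))
        (mul_nonneg hu0.le (TT_nonneg hu0.le hw.le (H + 1))) h1 hB'
    -- hc : γ*(u-w) * Sg (H+1) w ≤ β*(x-v) * Sg (H+1) x
    nlinarith [hc]


lemma Sg_succ (H : ℕ) (q : ℝ) : Sg (H + 1) q = q * Sg H q + 1 := by
  unfold Sg
  rw [Finset.sum_range_succ', pow_zero, Finset.mul_sum]
  congr 1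
  exact Finset.sum_congr rfl (fun i _ => by rw [pow_succ]; ring)

lemma dd_opt {p1x p2x p1y p2y : ℝ}
    (h1x0 : 0 < p1x) (h2x0 : 0 < p2x) (h1y0 : 0 < p1y) (h2y0 : 0 < p2y)
    (hdd1 : p2y ≤ p1x) (hdd2 : p1y ≤ p2y) (hdd3 : p2x ≤ p2y) :
    ∀ H β γ, 0 ≤ β → 0 ≤ γ → ∀ a : ℕ → Bool,
      Wret p1x p2x p1y p2y β γ H a
        ≤ max (Wret p1x p2x p1y p2y β γ H (fun _ => true))
              (Wret p1x p2x p1y p2y β γ H (fun _ => false)) := by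
  intro H
  induction H with
  | zero =>
    intro β γ hβ hγ a
    simp [Wret]
  | succ H ih =>
    intro β γ hβ hγ a
    rw [Wret_constT, Wret_constF]
    cases ha : a 0 with
    | true =>
      rw [Wret_succ_true p1x p2x p1y p2y β γ H a ha]
      have h2 := ih (β * p1x) (γ * p1y) (by positivity) (by positivity) (fun j => a (j + 1))
      rw [Wret_constT, Wret_constF] at h2
      rcases max_cases (β * p1x * p1x * Sg H p1x + γ * p1y * p1y * Sg H p1y)
          (β * p1x * p2x * Sg H p2x + γ * p1y * p2y * Sg H p2y) with ⟨hm, _⟩ | ⟨hm, _⟩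
      · -- tail best is all-true: total = all-true (H+1)
        rw [hm] at h2
        have goal1 : Wret p1x p2x p1y p2y (β * p1x) (γ * p1y) H (fun j => a (j + 1))
            + (β * p1x + γ * p1y)
            ≤ β * p1x * Sg (H + 1) p1x + γ * p1y * Sg (H + 1) p1y := by
          rw [Sg_succ, Sg_succ]; nlinarith [h2]
        exact le_max_of_le_left goal1
      · rw [hm] at h2
        have step : Wret p1x p2x p1y p2y (β * p1x) (γ * p1y) H (fun j => a (j + 1))
            + (β * p1x + γ * p1y)
            ≤ β * p1x * Sg (H + 1) p2x + γ * p1y * Sg (H + 1) p2y := by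
          rw [Sg_succ, Sg_succ]; nlinarith [h2]
        refine le_trans step ?_
        exact lemA h2x0 h1y0 hdd3 hdd2 hdd1 hβ hγ H
    | false =>
      rw [Wret_succ_false p1x p2x p1y p2y β γ H a ha]
      have h2 := ih (β * p2x) (γ * p2y) (by positivity) (by positivity) (fun j => a (j + 1))
      rw [Wret_constT, Wret_constF] at h2
      rcases max_cases (β * p2x * p1x * Sg H p1x + γ * p2y * p1y * Sg H p1y)
          (β * p2x * p2x * Sg H p2x + γ * p2y * p2y * Sg H p2y) with ⟨hm, _⟩ | ⟨hm, _⟩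
      · rw [hm] at h2
        have step : Wret p1x p2x p1y p2y (β * p2x) (γ * p2y) H (fun j => a (j + 1))
            + (β * p2x + γ * p2y)
            ≤ β * p2x * Sg (H + 1) p1x + γ * p2y * Sg (H + 1) p1y := by
          rw [Sg_succ, Sg_succ]; nlinarith [h2]
        refine le_trans step ?_
        exact lemB h2x0 h1y0 hdd3 hdd2 hdd1 hβ hγ H
      · rw [hm] at h2
        have goal1 : Wret p1x p2x p1y p2y (β * p2x) (γ * p2y) H (fun j => a (j + 1))
            + (β * p2x + γ * p2y)
            ≤ β * p2x * Sg (H + 1) p2x + γ * p2y * Sg (H + 1) p2y := by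
          rw [Sg_succ, Sg_succ]; nlinarith [h2]
        exact le_max_of_le_right goal1


end DDaux

/-- Under the dominant-diagonal structure
(`P₁ₓ ≥ P₂ᵧ > P₁ᵧ` and `P₂ᵧ > P₂ₓ`), for every finite horizon `H` the optimal
`H`-step deterministic category sequence is constant: either all Category 1
or all Category 2. -/
theorem dominant_diagonal_constant_optimal
    (p1x p2x p1y p2y b : ℝ) (H : ℕ)
    (h1x : p1x ∈ Set.Ioo (0 : ℝ) 1) (h2x : p2x ∈ Set.Ioo (0 : ℝ) 1)
    (h1y : p1y ∈ Set.Ioo (0 : ℝ) 1) (h2y : p2y ∈ Set.Ioo (0 : ℝ) 1)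
    (hb : b ∈ Set.Icc (0 : ℝ) 1)
    (hdd1 : p2y ≤ p1x) (hdd2 : p1y < p2y) (hdd3 : p2x < p2y) :
    ∃ c : Bool, ∀ a : ℕ → Bool,
      finiteReturn p1x p2x p1y p2y b H a
        ≤ finiteReturn p1x p2x p1y p2y b H (fun _ => c) := by

  obtain ⟨hb0, hb1⟩ := hb
  have hret : ∀ a : ℕ → Bool, finiteReturn p1x p2x p1y p2y b H a
      = DDaux.Wret p1x p2x p1y p2y b (1 - b) H a := fun a => rfl
  have key := DDaux.dd_opt h1x.1 h2x.1 h1y.1 h2y.1 hdd1 hdd2.le hdd3.le H b (1 - b)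
      hb0 (by linarith)
  rcases le_total (DDaux.Wret p1x p2x p1y p2y b (1 - b) H (fun _ => true))
      (DDaux.Wret p1x p2x p1y p2y b (1 - b) H (fun _ => false)) with h | h
  · refine ⟨false, fun a => ?_⟩
    rw [hret, hret]
    exact le_trans (key a) (max_le h (le_refl _))
  · refine ⟨true, fun a => ?_⟩
    rw [hret, hret]
    exact le_trans (key a) (max_le (le_refl _) h)
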